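/- (id, strict delayed simulation) is not good for pruning: there exists a 2-state Büchi automaton A with A = A/⊑^de such that removing a transition (p,a,q) dominated via strict delayed simulation (q ≺^de p) makes the language empty, although the original language is nonempty. -/
import Mathlib


/-- A (nondeterministic) Büchi automaton over alphabet `σ` with state space `Q`. -/
structure BA (σ Q : Type) where
  I : Set Q
  F : Set Q
  δ : Q → σ → Q → Prop

namespace BA
variable {σ Q : Type}

def InfTrace (A : BA σ Q) (w : ℕ → σ) (ρ : ℕ → Q) : Prop :=
  ∀ i, A.δ (ρ i) (w i) (ρ (i + 1))

def Fair (A : BA σ Q) (ρ : ℕ → Q) : Prop :=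
  ∀ n, ∃ m, n ≤ m ∧ ρ m ∈ A.F

def Lang (A : BA σ Q) : Set (ℕ → σ) :=
  {w | ∃ ρ, A.InfTrace w ρ ∧ ρ 0 ∈ A.I ∧ A.Fair ρ}

/-- The delayed winning condition on a pair of traces: every accepting position of the
first trace is followed (at the same or a later index) by an accepting position of the
second. -/
def Cde (A : BA σ Q) (ρ τ : ℕ → Q) : Prop :=
  ∀ i, ρ i ∈ A.F → ∃ j, i ≤ j ∧ τ j ∈ A.F

end BA

/-- A Duplicator strategy is causal: its move at round `i` (producing Duplicator's
`(i+1)`-st state) only depends on the word up to position `i` and on Spoiler's states up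
to position `i+1`. -/
def Causal1 {σ Q : Type} (f : ℕ → (ℕ → σ) → (ℕ → Q) → Q) : Prop :=
  ∀ i (w w' : ℕ → σ) (ρ ρ' : ℕ → Q),
    (∀ j ≤ i, w j = w' j) → (∀ j ≤ i + 1, ρ j = ρ' j) → f i w ρ = f i w' ρ'

/-- The Duplicator trace produced by playing strategy `f` from `q` against Spoiler's
trace `ρ` on word `w`. -/
def play {σ Q : Type} (q : Q) (f : ℕ → (ℕ → σ) → (ℕ → Q) → Q)
    (w : ℕ → σ) (ρ : ℕ → Q) : ℕ → Q
  | 0 => q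
  | i + 1 => f i w ρ

/-- Delayed simulation `p ⊑^de q`: Duplicator has a (causal, step-wise) winning strategy
in the delayed simulation game from `(p,q)`. -/
def deSim {σ Q : Type} (A : BA σ Q) (p q : Q) : Prop :=
  ∃ f, Causal1 f ∧ ∀ (w : ℕ → σ) (ρ : ℕ → Q),
    A.InfTrace w ρ → ρ 0 = p →
    A.InfTrace w (play q f w ρ) ∧ A.Cde ρ (play q f w ρ)

/-- Pruning w.r.t. `P(id, ≺^de)`: remove every transition `(p,a,r)` such that some
transition `(p,a,r')` exists with `r` strictly delayed-simulated by `r'`. -/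
def pruneDe {σ Q : Type} (A : BA σ Q) : BA σ Q where
  I := A.I
  F := A.F
  δ := fun p a r => A.δ p a r ∧
    ¬ ∃ r', A.δ p a r' ∧ deSim A r r' ∧ ¬ deSim A r' r

/-- The counterexample automaton: state 0 = p (initial), state 1 = q (accepting);
letter 0 = a, letter 1 = b. Transitions: p→ₐp, p→_b p, p→ₐq, q→ₐq. -/
def A0 : BA (Fin 2) (Fin 2) where
  I := {0}
  F := {1}
  δ := fun x a y => (x = 0 ∧ y = 0) ∨ (a = 0 ∧ y = 1)

lemma not_deSim01 : ¬ deSim A0 0 1 := by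
  rintro ⟨f, -, h⟩
  have hh := h (fun _ => 1) (fun _ => 0) (fun i => Or.inl ⟨rfl, rfl⟩) rfl
  have h0 := hh.1 0
  rcases h0 with ⟨h1, -⟩ | ⟨h2, -⟩
  · exact absurd (show (1 : Fin 2) = 0 from h1) (by decide)
  · exact absurd h2 (by decide)

lemma deSim_refl (x : Fin 2) : deSim A0 x x := by
  refine ⟨fun i _ ρ => ρ (i + 1), ?_, ?_⟩
  · intro i w w' ρ ρ' hw hρ; exact hρ (i + 1) le_rfl
  · intro w ρ htr h0
    have hplay : ∀ i, play x (fun i _ ρ => ρ (i + 1)) w ρ i = ρ i := by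
      intro i; cases i with
      | zero => simpa [play] using h0.symm
      | succ n => rfl
    refine ⟨?_, ?_⟩
    · intro i; rw [hplay i, hplay (i + 1)]; exact htr i
    · intro i hi; exact ⟨i, le_rfl, by rw [hplay i]; exact hi⟩

lemma deSim10 : deSim A0 1 0 := by
  refine ⟨fun _ _ _ => 1, ?_, ?_⟩
  · intro _ _ _ _ _ _ _; rfl
  · intro w ρ htr h0
    have hρ : ∀ i, ρ i = 1 := by
      intro i; induction i with
      | zero => exact h0
      | succ n ih =>
        have ht := htr n; rw [ih] at ht
        rcases ht with ⟨h1, -⟩ | ⟨-, h2⟩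
        · exact absurd h1 (by decide)
        · exact h2
    have hw : ∀ i, w i = 0 := by
      intro i
      have ht := htr i; rw [hρ i, hρ (i + 1)] at ht
      rcases ht with ⟨h1, -⟩ | ⟨h2, -⟩
      · exact absurd h1 (by decide)
      · exact h2
    refine ⟨?_, ?_⟩
    · intro i
      cases i with
      | zero => exact Or.inr ⟨hw 0, rfl⟩
      | succ n => exact Or.inr ⟨hw (n + 1), rfl⟩
    · intro i _
      exact ⟨i + 1, Nat.le_succ i, by show (1 : Fin 2) ∈ ({1} : Set (Fin 2)); rfl⟩

/-- `P(id, ≺^de)` is not good for pruning: there exists a 2-state Büchi automaton `A`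
with `A = A/⊑^de` (delayed-simulation equivalence is trivial) whose language is
nonempty, but pruning the transitions dominated via strict delayed simulation makes the
language empty. -/

theorem prune_deSimStrict_not_GFP :
    ∃ A : BA (Fin 2) (Fin 2),
      (∀ x y, deSim A x y → deSim A y x → x = y) ∧
      A.Lang ≠ ∅ ∧ (pruneDe A).Lang = ∅ := by
  refine ⟨A0, ?_, ?_, ?_⟩
  · intro x y hxy hyx
    fin_cases x <;> fin_cases y <;> first
      | rfl
      | exact absurd hxy not_deSim01
      | exact absurd hyx not_deSim01
  · intro h
    have hmem : (fun _ => (0 : Fin 2)) ∈ A0.Lang := by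
      refine ⟨fun i => if i = 0 then 0 else 1, ?_, rfl, ?_⟩
      · intro i
        cases i with
        | zero => exact Or.inr ⟨rfl, rfl⟩
        | succ n => exact Or.inr ⟨rfl, rfl⟩
      · intro n
        exact ⟨n + 1, Nat.le_succ n, by show (if n + 1 = 0 then (0:Fin 2) else 1) ∈ _; simp [A0]⟩
    rw [h] at hmem
    exact hmem
  · ext w
    simp only [Set.mem_empty_iff_false, iff_false]
    rintro ⟨ρ, htr, h0, hfair⟩
    have hρ : ∀ i, ρ i = 0 := by
      intro i; induction i with
      | zero => exact h0
      | succ n ih =>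
        have ht := htr n
        rw [ih] at ht
        obtain ⟨hδ, hnp⟩ := ht
        rcases hδ with ⟨-, h1⟩ | ⟨ha, h1⟩
        · exact h1
        · exfalso
          exact hnp ⟨0, Or.inl ⟨rfl, rfl⟩, by rw [h1]; exact ⟨deSim10, not_deSim01⟩⟩
    obtain ⟨m, -, hm⟩ := hfair 0
    rw [hρ m] at hm
    exact absurd hm (by simp [pruneDe, A0])
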